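/- Suppose W_0(z) = 1, W_1(z) = z, and W_n(z) = (4z² + 1)·W_{n-1}(z) + e^{−2πi/3}·z·W_{n-2}(z) for n ≥ 2. Then for c = e^{πi/3}/2 and n ≥ 0, W_n(c) = 0 if and only if n ≡ 2 (mod 4). -/

import Mathlib

open Polynomial in
theorem stmt_15 (W : ℕ → Polynomial ℂ) (hW0 : W 0 = 1) (hW1 : W 1 = X)
    (hrec : ∀ n, 2 ≤ n →
      W n = (4 * X ^ 2 + 1) * W (n - 1)
              + Polynomial.C (Complex.exp (-2 * Real.pi * Complex.I / 3)) * X * W (n - 2)) :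
    ∀ n : ℕ, (W n).eval (Complex.exp (Real.pi * Complex.I / 3) / 2) = 0 ↔ n % 4 = 2 := by
  set ω : ℂ := Complex.exp (Real.pi * Complex.I / 3) with hωdef
  have hωne : ω ≠ 0 := Complex.exp_ne_zero _
  have hωval : ω = 1/2 + (Real.sqrt 3 : ℝ)/2 * Complex.I := by
    rw [hωdef, show ((Real.pi : ℂ) * Complex.I / 3) = ((Real.pi/3 : ℝ) : ℂ) * Complex.I by
      push_cast; ring, Complex.exp_mul_I, ← Complex.ofReal_cos, ← Complex.ofReal_sin,
      Real.cos_pi_div_three, Real.sin_pi_div_three]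
    push_cast; ring
  have hs : ((Real.sqrt 3 : ℝ) : ℂ)^2 = 3 := by
    rw [← Complex.ofReal_pow, Real.sq_sqrt (by norm_num : (3:ℝ) ≥ 0)]; norm_num
  have hω2 : ω^2 = ω - 1 := by
    rw [hωval]
    linear_combination (Complex.I^2/4) * hs + (3/4) * Complex.I_sq
  have hE : Complex.exp (-2 * Real.pi * Complex.I / 3) = -ω := by
    rw [show (-2 * (Real.pi:ℂ) * Complex.I / 3) =
        (Real.pi : ℂ) * Complex.I / 3 + (Real.pi : ℂ) * Complex.I + (-(2 * Real.pi * Complex.I))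
        by ring, Complex.exp_add, Complex.exp_add, Complex.exp_pi_mul_I, Complex.exp_neg,
        Complex.exp_two_pi_mul_I, hωdef]
    simp
  have hω3 : ω^3 = -1 := by
    rw [hωdef, ← Complex.exp_nat_mul]
    rw [show (3:ℕ) * ((Real.pi:ℂ) * Complex.I / 3) = (Real.pi:ℂ) * Complex.I by push_cast; ring]
    exact Complex.exp_pi_mul_I
  have h0 : (W 0).eval (ω/2) = 1 := by simp [hW0]
  have h1 : (W 1).eval (ω/2) = ω/2 := by simp [hW1]
  have hr : ∀ m : ℕ, (W (m+2)).eval (ω/2)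
      = ω * (W (m+1)).eval (ω/2) - ω^2/2 * (W m).eval (ω/2) := by
    intro m
    have h := hrec (m+2) (by omega)
    simp only [show m+2-1 = m+1 from rfl, show m+2-2 = m from rfl] at h
    rw [h]
    simp only [eval_add, eval_mul, eval_pow, eval_C, eval_X, eval_one, eval_ofNat, hE]
    linear_combination ((W (m+1)).eval (ω/2)) * hω2
  have key : ∀ k : ℕ, (W (4*k)).eval (ω/2) = (ω/4)^k
      ∧ (W (4*k+1)).eval (ω/2) = (ω/4)^k * ω/2
      ∧ (W (4*k+2)).eval (ω/2) = 0
      ∧ (W (4*k+3)).eval (ω/2) = (ω/4)^k/4 := by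
    intro k
    induction k with
    | zero =>
      have h2 : (W 2).eval (ω/2) = 0 := by
        rw [show (2:ℕ) = 0+2 from rfl, hr 0, h0, h1]
        ring
      have h3 : (W 3).eval (ω/2) = 1/4 := by
        rw [show W 3 = W (1+2) from rfl, hr 1, h2, h1]
        linear_combination (-1/4 : ℂ) * hω3
      exact ⟨by simpa using h0, by simpa using h1, by simpa using h2, by simpa using h3⟩
    | succ k ih =>
      obtain ⟨i0, i1, i2, i3⟩ := ih
      have e4 : (W (4*(k+1))).eval (ω/2) = (ω/4)^(k+1) := by
        have := hr (4*k+2)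
        rw [show 4*(k+1) = 4*k+2+2 by ring, this,
          show 4*k+2+1 = 4*k+3 from rfl, i3, i2]; ring
      have e5 : (W (4*(k+1)+1)).eval (ω/2) = (ω/4)^(k+1) * ω/2 := by
        have := hr (4*k+3)
        rw [show 4*(k+1)+1 = 4*k+3+2 by ring, this,
          show 4*k+3+1 = 4*(k+1) from by ring, e4, i3]; ring
      have e6 : (W (4*(k+1)+2)).eval (ω/2) = 0 := by
        have := hr (4*(k+1))
        rw [show 4*(k+1)+2 = 4*(k+1)+2 from rfl, this, e5, e4]; ring
      have e7 : (W (4*(k+1)+3)).eval (ω/2) = (ω/4)^(k+1)/4 := by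
        have := hr (4*(k+1)+1)
        rw [show 4*(k+1)+3 = 4*(k+1)+1+2 by ring, this,
          show 4*(k+1)+1+1 = 4*(k+1)+2 from rfl, e6, e5]
        linear_combination (-(ω/4)^k * ω / 16) * hω3
      exact ⟨e4, e5, e6, e7⟩
  intro n
  have hn : 4 * (n/4) + n % 4 = n := Nat.div_add_mod n 4
  obtain ⟨K0, K1, K2, K3⟩ := key (n/4)
  have hpne : (ω/4)^(n/4) ≠ 0 := pow_ne_zero _ (by simpa using hωne)
  rcases (show n % 4 = 0 ∨ n % 4 = 1 ∨ n % 4 = 2 ∨ n % 4 = 3 by omega) with h | h | h | h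
  · rw [show n = 4*(n/4) by omega, K0]
    simp [hpne, show (4*(n/4)) % 4 = 0 by omega]
  · rw [show n = 4*(n/4)+1 by omega, K1]
    simp only [_root_.div_eq_zero_iff, mul_eq_zero]
    simp [hpne, hωne]
  · rw [show n = 4*(n/4)+2 by omega, K2]
    simp [show (4*(n/4)+2) % 4 = 2 by omega]
  · rw [show n = 4*(n/4)+3 by omega, K3]
    simp only [_root_.div_eq_zero_iff]
    simp [hpne]
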